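/- Let (R, 𝔪) be an Artinian local ring and let φ : B → C be an injective homomorphism of R-algebras with C flat over R. Then B is flat over R if and only if the kernel of the composite B → C → C/𝔪C equals 𝔪B. -/

import Mathlib

open TensorProduct LinearMap

theorem aux1 {R M N : Type*} [CommRing R] [AddCommGroup M] [Module R M]
    [AddCommGroup N] [Module R N] (I : Ideal R)
    (hN : I • (⊤ : Submodule R N) = ⊥) :
    Function.Injective (lTensor N (I • (⊤ : Submodule R M)).mkQ) := by
  have hzero : lTensor N (I • (⊤ : Submodule R M)).subtype = 0 := by
    apply TensorProduct.ext'
    intro n x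
    obtain ⟨x, hx⟩ := x
    simp only [lTensor_tmul, Submodule.subtype_apply, LinearMap.zero_apply]
    refine Submodule.smul_induction_on hx (fun r hr y _ => ?_) (fun a b iha ihb => ?_)
    · have h0 : r • n = 0 := by
        have : r • n ∈ I • (⊤ : Submodule R N) := Submodule.smul_mem_smul hr trivial
        rwa [hN, Submodule.mem_bot] at this
      rw [← TensorProduct.smul_tmul, h0, TensorProduct.zero_tmul]
    · rw [TensorProduct.tmul_add, iha, ihb, add_zero]
  rw [← LinearMap.ker_eq_bot, lTensor_mkQ, hzero, LinearMap.range_zero]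

theorem aux2 {R M M' N : Type*} [CommRing R] [AddCommGroup M] [Module R M]
    [AddCommGroup M'] [Module R M'] [AddCommGroup N] [Module R N]
    (I : Ideal R) [I.IsMaximal] (f : M →ₗ[R] M')
    (hker : ∀ x : M, f x ∈ I • (⊤ : Submodule R M') → x ∈ I • (⊤ : Submodule R M))
    (hN : I • (⊤ : Submodule R N) = ⊥) :
    Function.Injective (lTensor N f) := by
  set p : Submodule R M := I • ⊤ with hp
  set q : Submodule R M' := I • ⊤ with hq
  have hle : p ≤ Submodule.comap f q := by
    intro x hx
    refine Submodule.smul_induction_on hx (fun r hr y _ => ?_) (fun a b ha hb => ?_)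
    · simp only [Submodule.mem_comap, map_smul]
      exact Submodule.smul_mem_smul hr trivial
    · simpa using Submodule.add_mem _ ha hb
  set φbar : M ⧸ p →ₗ[R] M' ⧸ q := Submodule.mapQ p q f hle with hφbar
  have hinj : Function.Injective φbar := by
    rw [← LinearMap.ker_eq_bot]
    ext x
    obtain ⟨x, rfl⟩ := Submodule.mkQ_surjective p x
    simp only [LinearMap.mem_ker, Submodule.mem_bot, Submodule.mkQ_apply,
      Submodule.mapQ_apply, Submodule.Quotient.mk_eq_zero, hφbar]
    exact ⟨fun h => hker x h, fun h => hle h⟩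
  letI : Field (R ⧸ I) := Ideal.Quotient.field I
  have hsurj : Function.Surjective (algebraMap R (R ⧸ I)) := by
    rw [Ideal.Quotient.algebraMap_eq]; exact Ideal.Quotient.mk_surjective
  set φk := LinearMap.extendScalarsOfSurjective hsurj φbar with hφk
  obtain ⟨s, hs⟩ := φk.exists_leftInverse_of_injective (LinearMap.ker_eq_bot.mpr hinj)
  set s' : (M' ⧸ q) →ₗ[R] (M ⧸ p) := s.restrictScalars R with hs'
  have key : s' ∘ₗ (q.mkQ ∘ₗ f) = p.mkQ := by
    ext x
    have : φk (p.mkQ x) = q.mkQ (f x) := by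
      simp [hφk, hφbar, Submodule.mapQ_apply, LinearMap.extendScalarsOfSurjective]
    simp only [LinearMap.comp_apply, hs', LinearMap.coe_restrictScalars, ← this]
    exact congrArg (fun g => g (p.mkQ x)) hs
  have hmkinj : Function.Injective (lTensor N p.mkQ) := aux1 I hN
  rw [← key, lTensor_comp, lTensor_comp] at hmkinj
  have h2 : Function.Injective (⇑(lTensor N s') ∘ ⇑(lTensor N q.mkQ) ∘ ⇑(lTensor N f)) := by
    simpa [LinearMap.coe_comp] using hmkinj
  exact h2.of_comp.of_comp

theorem aux3 {R M M' : Type*} [CommRing R] [AddCommGroup M] [Module R M]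
    [AddCommGroup M'] [Module R M'] [Module.Flat R M']
    (I : Ideal R) [I.IsMaximal] (hnil : IsNilpotent I) (f : M →ₗ[R] M')
    (hf : Function.Injective f)
    (hker : ∀ x : M, f x ∈ I • (⊤ : Submodule R M') → x ∈ I • (⊤ : Submodule R M))
    (N : Type*) [AddCommGroup N] [Module R N] :
    Function.Injective (lTensor N f) := by
  obtain ⟨n, hn⟩ := hnil
  have main : ∀ (j : ℕ) (N' : Type _) [AddCommGroup N'] [Module R N'],
      I ^ j • (⊤ : Submodule R N') = ⊥ → Function.Injective (lTensor N' f) := by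
    intro j
    induction j with
    | zero =>
        intro N' _ _ hN'
        rw [pow_zero, Ideal.one_eq_top, Submodule.top_smul] at hN'
        haveI : Subsingleton N' := by
          constructor
          intro a b
          have ha : a ∈ (⊥ : Submodule R N') := hN' ▸ Submodule.mem_top
          have hb : b ∈ (⊥ : Submodule R N') := hN' ▸ Submodule.mem_top
          rw [Submodule.mem_bot] at ha hb
          rw [ha, hb]
        exact Function.injective_of_subsingleton _
    | succ j ih =>
        intro N' _ _ hN'
        set N₀ : Submodule R N' := I • ⊤ with hN₀def
        have hN₀ : I ^ j • (⊤ : Submodule R ↥N₀) = ⊥ := by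
          rw [Submodule.eq_bot_iff]
          intro x hx
          have hval : (x : N') ∈ Submodule.map N₀.subtype (I ^ j • ⊤) :=
            Submodule.mem_map_of_mem hx
          rw [Submodule.map_smul'', Submodule.map_subtype_top] at hval
          have hle : I ^ j • N₀ ≤ ⊥ := by
            rw [hN₀def, ← mul_smul, ← pow_succ, hN']
          exact Subtype.ext (by simpa using hle hval)
        have hquot : I • (⊤ : Submodule R (N' ⧸ N₀)) = ⊥ := by
          rw [Submodule.eq_bot_iff]
          intro z hz
          refine Submodule.smul_induction_on hz (fun r hr y _ => ?_)
            (fun a b ha hb => by rw [ha, hb, add_zero])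
          obtain ⟨y, rfl⟩ := Submodule.mkQ_surjective N₀ y
          rw [Submodule.mkQ_apply, ← Submodule.Quotient.mk_smul,
            Submodule.Quotient.mk_eq_zero]
          exact Submodule.smul_mem_smul hr trivial
        have hbase : Function.Injective (lTensor (N' ⧸ N₀) f) := aux2 I f hker hquot
        rw [injective_iff_map_eq_zero]
        intro z hz
        have h1 : rTensor M N₀.mkQ z = 0 := by
          apply hbase
          have : lTensor (N' ⧸ N₀) f (rTensor M N₀.mkQ z)
              = rTensor M' N₀.mkQ (lTensor N' f z) := by
            rw [← LinearMap.comp_apply, ← LinearMap.comp_apply,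
              lTensor_comp_rTensor, rTensor_comp_lTensor]
          rw [this, hz, map_zero, map_zero]
        obtain ⟨y, rfl⟩ : z ∈ LinearMap.range (rTensor M N₀.subtype) := by
          rw [← rTensor_mkQ]; exact h1
        have h2 : rTensor M' N₀.subtype (lTensor ↥N₀ f y) = 0 := by
          rw [← LinearMap.comp_apply, rTensor_comp_lTensor, ← lTensor_comp_rTensor,
            LinearMap.comp_apply, hz]
        have h3 : lTensor ↥N₀ f y = 0 :=
          (Module.Flat.rTensor_preserves_injective_linearMap N₀.subtype
            N₀.injective_subtype) (by rw [h2, map_zero])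
        have h4 : y = 0 := by
          apply ih ↥N₀ hN₀
          rw [h3, map_zero]
        rw [h4, map_zero]
  refine main n N ?_
  rw [hn]
  exact Submodule.bot_smul ⊤

open TensorProduct LinearMap

section Aux
variable {R : Type*} [CommRing R]

theorem socle_exists [IsArtinianRing R] [IsLocalRing R] :
    ∃ a : R, a ≠ 0 ∧ ∀ r ∈ IsLocalRing.maximalIdeal R, a * r = 0 := by
  have hnilp : IsNilpotent (IsLocalRing.maximalIdeal R) := by
    rw [← IsLocalRing.jacobson_eq_maximalIdeal (⊥ : Ideal R) bot_ne_top]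
    exact IsArtinianRing.isNilpotent_jacobson_bot
  obtain ⟨n, hn⟩ := hnilp
  induction n with
  | zero =>
      exfalso
      rw [pow_zero, Ideal.one_eq_top] at hn
      have h1 : (1 : R) ∈ (⊤ : Ideal R) := Submodule.mem_top
      rw [hn] at h1
      simp only [Ideal.zero_eq_bot, Ideal.mem_bot] at h1
      exact one_ne_zero h1
  | succ n ih =>
      by_cases h : IsLocalRing.maximalIdeal R ^ n = 0
      · exact ih h
      · obtain ⟨a, ha, ha0⟩ := Submodule.exists_mem_ne_zero_of_ne_bot h
        refine ⟨a, ha0, fun r hr => ?_⟩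
        have : a * r ∈ IsLocalRing.maximalIdeal R ^ (n + 1) := by
          rw [pow_succ]
          exact Ideal.mul_mem_mul ha hr
        rw [hn] at this
        simpa using this
end Aux

/-- Let `(R, 𝔪)` be an Artinian local ring and `φ : B → C` an injective homomorphism of
`R`-algebras with `C` flat over `R`.  Then `B` is flat over `R` iff the kernel of the
composite `B → C → C/𝔪C` equals `𝔪B`. -/
theorem stmt7 {R : Type*} [CommRing R] [IsArtinianRing R] [IsLocalRing R]
    {B C : Type*} [CommRing B] [CommRing C] [Algebra R B] [Algebra R C]
    (φ : B →ₐ[R] C) (hφ : Function.Injective φ) [Module.Flat R C] :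
    Module.Flat R B ↔
      RingHom.ker ((Ideal.Quotient.mk
          (Ideal.map (algebraMap R C) (IsLocalRing.maximalIdeal R))).comp φ.toRingHom) =
        Ideal.map (algebraMap R B) (IsLocalRing.maximalIdeal R) := by
  set m := IsLocalRing.maximalIdeal R with hm
  have hkermem : ∀ x : B, x ∈ RingHom.ker ((Ideal.Quotient.mk
      (Ideal.map (algebraMap R C) m)).comp φ.toRingHom) ↔
      φ x ∈ Ideal.map (algebraMap R C) m := by
    intro x
    rw [RingHom.mem_ker, RingHom.comp_apply, Ideal.Quotient.eq_zero_iff_mem]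
    rfl
  have hsmulB : ∀ x : B, x ∈ (m • (⊤ : Submodule R B)) ↔ x ∈ Ideal.map (algebraMap R B) m := by
    intro x
    rw [Ideal.smul_top_eq_map, Submodule.restrictScalars_mem]
  have hsmulC : ∀ y : C, y ∈ (m • (⊤ : Submodule R C)) ↔ y ∈ Ideal.map (algebraMap R C) m := by
    intro y
    rw [Ideal.smul_top_eq_map, Submodule.restrictScalars_mem]
  constructor
  · -- flat ⇒ kernel = mB
    intro hflat
    ext x
    rw [hkermem]
    constructor
    · -- φ x ∈ mC → x ∈ mB
      intro hx
      obtain ⟨a, ha0, ham⟩ := socle_exists (R := R)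
      -- a • φ x = 0
      have haC : a • φ x = 0 := by
        rw [← hsmulC] at hx
        refine Submodule.smul_induction_on hx (fun r hr c _ => ?_) (fun y z hy hz => ?_)
        · rw [smul_smul, ham r hr, zero_smul]
        · rw [smul_add, hy, hz, add_zero]
      have hax : a • x = 0 := by
        apply hφ
        rw [map_smul, haC, map_zero]
      -- use flatness
      set g : R →ₗ[R] R := LinearMap.toSpanSingleton R R a with hg
      set J : Ideal R := LinearMap.ker g with hJ
      have hJm : J ≤ m := by
        apply IsLocalRing.le_maximalIdeal
        intro hJtop
        apply ha0
        have h1 : (1 : R) ∈ J := hJtop ▸ Submodule.mem_top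
        simpa [hJ, hg, LinearMap.mem_ker, LinearMap.toSpanSingleton_apply] using h1
      have hexact : Function.Exact (rTensor B J.subtype) (rTensor B g) :=
        Module.Flat.rTensor_exact B (LinearMap.exact_subtype_ker_map g)
      have hz : rTensor B g ((1 : R) ⊗ₜ[R] x) = 0 := by
        rw [rTensor_tmul]
        have : g 1 = a := by simp [hg, LinearMap.toSpanSingleton_apply]
        rw [this]
        have h2 : a ⊗ₜ[R] x = (1 : R) ⊗ₜ[R] (a • x) := by
          rw [TensorProduct.tmul_smul, TensorProduct.smul_tmul']
          simp
        rw [h2, hax, TensorProduct.tmul_zero]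
      obtain ⟨y, hy⟩ := (hexact _).mp hz
      have hmemJ : ∀ w : ↥J ⊗[R] B,
          (TensorProduct.lid R B) (rTensor B J.subtype w) ∈ J • (⊤ : Submodule R B) := by
        intro w
        induction w with
        | zero => simp
        | tmul j b =>
            simp only [rTensor_tmul, Submodule.subtype_apply, TensorProduct.lid_tmul]
            exact Submodule.smul_mem_smul j.2 trivial
        | add u v hu hv => rw [map_add, map_add]; exact Submodule.add_mem _ hu hv
      have hxmem : x ∈ J • (⊤ : Submodule R B) := by
        have := hmemJ y
        rw [hy] at this
        simpa using this
      rw [← hsmulB]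
      exact Submodule.smul_le.mpr (fun r hr b hb => Submodule.smul_mem_smul (hJm hr) hb) hxmem
    · -- x ∈ mB → φ x ∈ mC
      intro hx
      have : φ x ∈ Ideal.map φ.toRingHom (Ideal.map (algebraMap R B) m) :=
        Ideal.mem_map_of_mem _ hx
      rw [Ideal.map_map] at this
      rwa [show φ.toRingHom.comp (algebraMap R B) = algebraMap R C from φ.comp_algebraMap]
        at this
  · -- kernel = mB ⇒ flat
    intro h
    have hker' : ∀ x : B, φ x ∈ m • (⊤ : Submodule R C) → x ∈ m • (⊤ : Submodule R B) := by
      intro x hx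
      rw [hsmulB, ← h, hkermem]
      rw [hsmulC] at hx
      exact hx
    have hnilp : IsNilpotent m := by
      rw [hm, ← IsLocalRing.jacobson_eq_maximalIdeal (⊥ : Ideal R) bot_ne_top]
      exact IsArtinianRing.isNilpotent_jacobson_bot
    rw [Module.Flat.iff_rTensor_injective']
    intro I
    rw [injective_iff_map_eq_zero]
    intro z hz
    have hpure : Function.Injective (lTensor ↥I φ.toLinearMap) :=
      aux3 m hnilp φ.toLinearMap hφ hker' ↥I
    apply hpure
    rw [map_zero]
    apply (Module.Flat.iff_rTensor_injective' : Module.Flat R C ↔ _).mp inferInstance I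
    rw [map_zero, ← LinearMap.comp_apply, rTensor_comp_lTensor, ← lTensor_comp_rTensor,
      LinearMap.comp_apply, hz, map_zero]
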